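/- Let λ, μ > 0 and z > 0 be real, and define the 2×2 real matrices A := [[−2λ, μ(z²+1)/z], [λ(z²+1)/z, −2μ]], S := [[μ−λ−h(z)/z, μ−λ+h(z)/z], [λ(z²+1)/z, λ(z²+1)/z]], and V := diag(v₁, v₂) with v₁ := −(λ+μ) − h(z)/z and v₂ := −(λ+μ) + h(z)/z. Then S is invertible with S⁻¹ = −z/(2λ(z²+1)h(z)) · [[λ(z²+1), z(λ−μ)−h(z)], [−λ(z²+1), z(μ−λ)−h(z)]], and A = S·V·S⁻¹. -/

import Mathlib

/-- `h(z) = √((μz²+λ)(λz²+μ))`. -/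
noncomputable def hFun (lam mu z : ℝ) : ℝ := Real.sqrt ((mu * z ^ 2 + lam) * (lam * z ^ 2 + mu))

/-- Diagonalization `A = S·V·S⁻¹` of the generating-function matrix, with the explicit
inverse of `S`. -/
theorem matrix_diagonalization (lam mu z : ℝ) (hlam : 0 < lam) (hmu : 0 < mu) (hz : 0 < z) :
    let h : ℝ := hFun lam mu z
    let A : Matrix (Fin 2) (Fin 2) ℝ :=
      !![-2 * lam, mu * (z ^ 2 + 1) / z; lam * (z ^ 2 + 1) / z, -2 * mu]
    let S : Matrix (Fin 2) (Fin 2) ℝ :=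
      !![mu - lam - h / z, mu - lam + h / z; lam * (z ^ 2 + 1) / z, lam * (z ^ 2 + 1) / z]
    let V : Matrix (Fin 2) (Fin 2) ℝ :=
      !![-(lam + mu) - h / z, 0; 0, -(lam + mu) + h / z]
    let Sinv : Matrix (Fin 2) (Fin 2) ℝ :=
      (-z / (2 * lam * (z ^ 2 + 1) * h)) •
        !![lam * (z ^ 2 + 1), z * (lam - mu) - h; -(lam * (z ^ 2 + 1)), z * (mu - lam) - h]
    S * Sinv = 1 ∧ Sinv * S = 1 ∧ A = S * V * Sinv := by
  intro h A S V Sinv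
  have hpos : 0 < h := by
    apply Real.sqrt_pos.mpr
    positivity
  have hsq : h ^ 2 = (mu * z ^ 2 + lam) * (lam * z ^ 2 + mu) := by
    rw [sq]
    exact Real.mul_self_sqrt (by positivity)
  clear_value h
  have hz' : z ≠ 0 := ne_of_gt hz
  have hh : h ≠ 0 := ne_of_gt hpos
  have hl : lam ≠ 0 := ne_of_gt hlam
  have hz2 : z ^ 2 + 1 ≠ 0 := by positivity
  refine ⟨?_, ?_, ?_⟩ <;>
  · show _ = _
    ext i j
    fin_cases i <;> fin_cases j <;>
      simp [A, S, V, Sinv, Matrix.mul_apply, Fin.sum_univ_succ, Matrix.one_apply] <;>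
      field_simp <;>
      first
        | ring1
        | linear_combination (-2*lam*z*(1+z^2)) * hsq
        | linear_combination (-2*lam*z*(1+z^2)*(2*z^3*h^2+1)) * hsq
        | linear_combination (4*lam*z^4*(1+z^2)*h^2) * hsq
        | linear_combination (-4*lam*z^4*(1+z^2)*h^2) * hsq
        | linear_combination (-2*h) * hsq
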